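/- For N > 0 define E^B(N) := inf{ x² + x(4λ − 2√(λ(1+λ))) + 2λ² + λ(1+λ) : λ ≥ 0, x ≥ 0, λ + x = N }. Then E^B(N) = N² − N + O(N^{2/3}) as N → ∞; that is, there exist constants C > 0 and N₀ > 0 such that |E^B(N) − (N² − N)| ≤ C·N^{2/3} for all N ≥ N₀. -/
import Mathlib


noncomputable section

/-- The Bogoliubov ground state energy of the toy model with one-mode Hilbert space and
Hamiltonian `a*a*aa`:
`E^B(N) = inf { x² + x(4λ − 2√(λ(1+λ))) + 2λ² + λ(1+λ) : λ ≥ 0, x ≥ 0, λ + x = N }`. -/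
def toyBogoliubovEnergy (N : ℝ) : ℝ :=
  sInf {E : ℝ | ∃ lam x : ℝ, 0 ≤ lam ∧ 0 ≤ x ∧ lam + x = N ∧
    E = x ^ 2 + x * (4 * lam - 2 * Real.sqrt (lam * (1 + lam))) + 2 * lam ^ 2
        + lam * (1 + lam)}

lemma toy_lower (N lam x : ℝ) (hl : 0 ≤ lam) (hx : 0 ≤ x) (h : lam + x = N) :
    N ^ 2 - N ≤ x ^ 2 + x * (4 * lam - 2 * Real.sqrt (lam * (1 + lam))) + 2 * lam ^ 2
        + lam * (1 + lam) := by
  set s := Real.sqrt (lam * (1 + lam)) with hs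
  have hs0 : 0 ≤ s := Real.sqrt_nonneg _
  have hs2 : s ^ 2 = lam * (1 + lam) := Real.sq_sqrt (by nlinarith)
  have hsle : 2 * s ≤ 2 * lam + 1 := by nlinarith
  subst h
  nlinarith [mul_nonneg hx (by linarith : (0:ℝ) ≤ 2 * lam + 1 - 2 * s), mul_nonneg hl hs0]

/-- `E^B(N) = N² − N + O(N^{2/3})` as `N → ∞`: there exist constants
`C > 0` and `N₀ > 0` such that `|E^B(N) − (N² − N)| ≤ C·N^{2/3}` for all `N ≥ N₀`. -/
theorem toyBogoliubovEnergy_asymptotics :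
    ∃ C > (0 : ℝ), ∃ N₀ > (0 : ℝ), ∀ N : ℝ, N₀ ≤ N →
      |toyBogoliubovEnergy N - (N ^ 2 - N)| ≤ C * N ^ ((2 : ℝ) / 3) := by
  refine ⟨5, by norm_num, 1, by norm_num, fun N hN => ?_⟩
  have hN0 : (0:ℝ) < N := by linarith
  set A : ℝ := N ^ ((1:ℝ)/3) with hAdef
  set B : ℝ := N ^ ((2:ℝ)/3) with hBdef
  have hA0 : 0 < A := Real.rpow_pos_of_pos hN0 _
  have hB0 : 0 < B := Real.rpow_pos_of_pos hN0 _
  have hA1 : 1 ≤ A := Real.one_le_rpow hN (by norm_num)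
  have hB1 : 1 ≤ B := Real.one_le_rpow hN (by norm_num)
  have hA2 : A ^ 2 = B := by
    rw [hAdef, hBdef, ← Real.rpow_natCast (N ^ ((1:ℝ)/3)) 2, ← Real.rpow_mul hN0.le]
    norm_num
  have hAB : A * B = N := by
    rw [hAdef, hBdef, ← Real.rpow_add hN0]
    norm_num
  have hAN : A ≤ N := by nlinarith
  -- the set is bounded below by N² - N
  have hbdd : BddBelow {E : ℝ | ∃ lam x : ℝ, 0 ≤ lam ∧ 0 ≤ x ∧ lam + x = N ∧
      E = x ^ 2 + x * (4 * lam - 2 * Real.sqrt (lam * (1 + lam))) + 2 * lam ^ 2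
        + lam * (1 + lam)} := by
    refine ⟨N ^ 2 - N, fun E hE => ?_⟩
    obtain ⟨lam, x, hl, hx, hsum, hEeq⟩ := hE
    rw [hEeq]; exact toy_lower N lam x hl hx hsum
  have hne : {E : ℝ | ∃ lam x : ℝ, 0 ≤ lam ∧ 0 ≤ x ∧ lam + x = N ∧
      E = x ^ 2 + x * (4 * lam - 2 * Real.sqrt (lam * (1 + lam))) + 2 * lam ^ 2
        + lam * (1 + lam)}.Nonempty := by
    refine ⟨N ^ 2, 0, N, le_refl 0, hN0.le, by ring, ?_⟩
    simp [Real.sqrt_zero]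
  -- lower bound on the infimum
  have hlow : N ^ 2 - N ≤ toyBogoliubovEnergy N := by
    apply le_csInf hne
    rintro E ⟨lam, x, hl, hx, hsum, hEeq⟩
    rw [hEeq]; exact toy_lower N lam x hl hx hsum
  -- upper bound via lam = N^{1/3}
  have hup : toyBogoliubovEnergy N ≤ N ^ 2 - N + 5 * B := by
    set s : ℝ := Real.sqrt (A * (1 + A)) with hs
    have hs0 : 0 ≤ s := Real.sqrt_nonneg _
    have hs2 : s ^ 2 = A * (1 + A) := Real.sq_sqrt (by nlinarith)
    have ht0 : 0 ≤ 1 + 2 * A - 2 * s := by nlinarith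
    have htprod : (1 + 2 * A - 2 * s) * (1 + 2 * A + 2 * s) = 1 := by nlinarith
    have h2At : 2 * A * (1 + 2 * A - 2 * s) ≤ 1 := by
      nlinarith [mul_nonneg ht0 (by linarith : (0:ℝ) ≤ 1 + 2 * s)]
    have hNt : 2 * N * (1 + 2 * A - 2 * s) ≤ B := by
      have := mul_le_mul_of_nonneg_left h2At hB0.le
      nlinarith
    have hxA : 0 ≤ N - A := by linarith
    have hmem : (N - A) ^ 2 + (N - A) * (4 * A - 2 * s) + 2 * A ^ 2 + A * (1 + A) ∈
        {E : ℝ | ∃ lam x : ℝ, 0 ≤ lam ∧ 0 ≤ x ∧ lam + x = N ∧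
          E = x ^ 2 + x * (4 * lam - 2 * Real.sqrt (lam * (1 + lam))) + 2 * lam ^ 2
            + lam * (1 + lam)} :=
      ⟨A, N - A, hA0.le, hxA, by ring, rfl⟩
    have hle := csInf_le hbdd hmem
    have hval : (N - A) ^ 2 + (N - A) * (4 * A - 2 * s) + 2 * A ^ 2 + A * (1 + A)
        ≤ N ^ 2 - N + 5 * B := by
      have hxt : (N - A) * (1 + 2 * A - 2 * s) ≤ N * (1 + 2 * A - 2 * s) :=
        mul_le_mul_of_nonneg_right (by linarith) ht0
      nlinarith [hA2, hAB]
    calc toyBogoliubovEnergy N ≤ _ := hle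
      _ ≤ N ^ 2 - N + 5 * B := hval
  rw [abs_le]
  constructor <;> nlinarith

end
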